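/- arXiv:1604.01998 — 4 statements merged into one kernel-verified Lean document; each statement's English description precedes it below -/
import Mathlib

section
/- Let V be a real inner product space and let β_1, …, β_r ∈ V be nonzero vectors. For a nonzero vector β set β^∨ := (2/⟨β, β⟩)·β and define the coreflection s_{β^∨} : V → V by s_{β^∨}(x) := x − ⟨x, β⟩·β^∨. Set a(k, j) := ⟨β_k, β_j^∨⟩, and define d_1 := 1 and d_k := −∑_{j=1}^{k−1} d_j · a(k, j) for k ≥ 2. Then for every j with 2 ≤ j ≤ r, d_j = −⟨ s_{β_{j−1}^∨} ∘ s_{β_{j−2}^∨} ∘ ⋯ ∘ s_{β_2^∨} (β_1^∨), β_j ⟩ (where for j = 2 the composition of reflections is empty, i.e. the identity map). -/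
open scoped RealInnerProductSpace

/-- The coroot `β^∨ = (2 / ⟪β, β⟫) • β` of a vector `β`. -/
noncomputable def coroot {V : Type*} [NormedAddCommGroup V] [InnerProductSpace ℝ V]
    (β : V) : V :=
  (2 / ⟪β, β⟫) • β

/-- The coreflection `s_{β^∨}(x) = x - ⟪x, β⟫ • β^∨`. -/
noncomputable def coreflect {V : Type*} [NormedAddCommGroup V] [InnerProductSpace ℝ V]
    (β x : V) : V :=
  x - ⟪x, β⟫ • coroot β

/-- `chainCoroot β j = s_{β_j^∨} ∘ ⋯ ∘ s_{β_2^∨} (β_1^∨)`, the iterated coreflection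
of the coroot of `β 1` (so `chainCoroot β 1 = β_1^∨`, the empty composition). -/
noncomputable def chainCoroot {V : Type*} [NormedAddCommGroup V] [InnerProductSpace ℝ V]
    (β : ℕ → V) : ℕ → V
  | 0 => 0
  | 1 => coroot (β 1)
  | (j + 2) => coreflect (β (j + 2)) (chainCoroot β (j + 1))

/-- Proposition 4.5 (iv): the recursively defined coefficients `d j` satisfy
`d j = -⟪α^∨_{i₁ ⋯ i_{j-1}}, α_{i_j}⟫` for all `2 ≤ j ≤ r`. -/
theorem stmt3 {V : Type*} [NormedAddCommGroup V] [InnerProductSpace ℝ V]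
    (r : ℕ) (β : ℕ → V) (hβ : ∀ j, 1 ≤ j → j ≤ r → β j ≠ 0)
    (a : ℕ → ℕ → ℝ) (ha : ∀ k j, a k j = ⟪β k, coroot (β j)⟫)
    (d : ℕ → ℝ) (hd1 : d 1 = 1)
    (hdk : ∀ k, 2 ≤ k → d k = -∑ j ∈ Finset.Ico 1 k, d j * a k j) :
    ∀ j, 2 ≤ j → j ≤ r → d j = -⟪chainCoroot β (j - 1), β j⟫ := by
  -- key lemma: the chain coroot is the linear combination ∑ d j • coroot (β j)
  have key : ∀ k, 1 ≤ k →
      chainCoroot β k = ∑ j ∈ Finset.Ico 1 (k + 1), d j • coroot (β j) := by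
    intro k
    induction k with
    | zero => intro h; omega
    | succ n ih =>
      intro _
      match n, ih with
      | 0, _ =>
        have : Finset.Ico 1 2 = {1} := rfl
        simp [chainCoroot, this, hd1]
      | (m + 1), ih =>
        have hih := ih (by omega)
        have hs : ⟪chainCoroot β (m + 1), β (m + 2)⟫ = -(d (m + 2)) := by
          rw [hih, sum_inner]
          have : ∀ j ∈ Finset.Ico 1 (m + 2),
              ⟪d j • coroot (β j), β (m + 2)⟫ = d j * a (m + 2) j := by
            intro j _
            rw [real_inner_smul_left, ha, real_inner_comm]
          rw [Finset.sum_congr rfl this, hdk (m + 2) (by omega)]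
          ring
        show coreflect (β (m + 2)) (chainCoroot β (m + 1)) = _
        rw [coreflect, hs, hih, Finset.sum_Ico_succ_top (by omega : 1 ≤ m + 2)]
        simp [sub_eq_add_neg]
  intro j hj _
  obtain ⟨m, rfl⟩ : ∃ m, j = m + 2 := ⟨j - 2, by omega⟩
  have hk : (m + 2) - 1 = m + 1 := rfl
  rw [hk, key (m + 1) (by omega), sum_inner]
  have : ∀ i ∈ Finset.Ico 1 (m + 2),
      ⟪d i • coroot (β i), β (m + 2)⟫ = d i * a (m + 2) i := by
    intro i _
    rw [real_inner_smul_left, ha, real_inner_comm]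
  rw [Finset.sum_congr rfl this, hdk (m + 2) (by omega)]
end

section
/- Let a : ℕ × ℕ → ℝ be a function satisfying a(2, 1) = 2 and a(k, 1) = a(k, 2) for all k ≥ 3. Define d_1 := 1 and d_k := −∑_{j=1}^{k−1} d_j · a(k, j) for k ≥ 2, and define d'_2 := 1 and d'_k := −∑_{j=2}^{k−1} d'_j · a(k, j) for k ≥ 3. Then d_1 + d_2 = −1 and d_k = −d'_k for every k ≥ 3. -/
/-- Corollary 4.6 (combinatorial content): if `a (2, 1) = 2` and
`a (k, 1) = a (k, 2)` for all `k ≥ 3`, then the coefficients `d` defined by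
`d 1 = 1`, `d k = -∑_{j=1}^{k-1} d j * a (k, j)` and the coefficients `d'`
defined by `d' 2 = 1`, `d' k = -∑_{j=2}^{k-1} d' j * a (k, j)` satisfy
`d 1 + d 2 = -1` and `d k = -d' k` for every `k ≥ 3`. -/
theorem stmt4 (a : ℕ × ℕ → ℝ)
    (ha21 : a (2, 1) = 2) (ha12 : ∀ k, 3 ≤ k → a (k, 1) = a (k, 2))
    (d : ℕ → ℝ) (hd1 : d 1 = 1)
    (hdk : ∀ k, 2 ≤ k → d k = -∑ j ∈ Finset.Ico 1 k, d j * a (k, j))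
    (d' : ℕ → ℝ) (hd'2 : d' 2 = 1)
    (hd'k : ∀ k, 3 ≤ k → d' k = -∑ j ∈ Finset.Ico 2 k, d' j * a (k, j)) :
    d 1 + d 2 = -1 ∧ ∀ k, 3 ≤ k → d k = -d' k := by
  have hd2 : d 2 = -2 := by
    have h := hdk 2 le_rfl
    rw [show Finset.Ico 1 2 = {1} from rfl] at h
    simpa [hd1, ha21] using h
  have hmain : ∀ k, 3 ≤ k → d k = -d' k := by
    intro k hk
    induction k using Nat.strong_induction_on with
    | _ k ih =>
      have h1 : (1 : ℕ) < k := by omega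
      have h2 : (2 : ℕ) < k := by omega
      have hs1 : ∑ j ∈ Finset.Ico 1 k, d j * a (k, j)
          = d 1 * a (k, 1) + (d 2 * a (k, 2)
            + ∑ j ∈ Finset.Ico 3 k, d j * a (k, j)) := by
        rw [Finset.sum_eq_sum_Ico_succ_bot h1, Finset.sum_eq_sum_Ico_succ_bot h2]
      have hs2 : ∑ j ∈ Finset.Ico 2 k, d' j * a (k, j)
          = d' 2 * a (k, 2) + ∑ j ∈ Finset.Ico 3 k, d' j * a (k, j) := by
        rw [Finset.sum_eq_sum_Ico_succ_bot h2]
      have hsum : ∑ j ∈ Finset.Ico 3 k, d j * a (k, j)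
          = ∑ j ∈ Finset.Ico 3 k, (-(d' j)) * a (k, j) := by
        refine Finset.sum_congr rfl fun j hj => ?_
        rw [Finset.mem_Ico] at hj
        rw [ih j hj.2 hj.1]
      rw [hdk k (by omega), hs1, hsum, hd'k k hk, hs2, hd1, hd2, hd'2,
        ha12 k hk]
      simp only [neg_mul, Finset.sum_neg_distrib]
      ring
  exact ⟨by rw [hd1, hd2]; ring, hmain⟩
end

section
/- Let V be a real inner product space and let β_1, …, β_r ∈ V be nonzero vectors with β_1 = β_2. For a nonzero vector β set β^∨ := (2/⟨β, β⟩)·β and define the coreflection s_{β^∨}(x) := x − ⟨x, β⟩·β^∨. Set a(k, j) := ⟨β_k, β_j^∨⟩, and define d_1 := 1 and d_k := −∑_{j=1}^{k−1} d_j · a(k, j) for k ≥ 2. Then for every j with 3 ≤ j ≤ r, d_j = ⟨ s_{β_{j−1}^∨} ∘ s_{β_{j−2}^∨} ∘ ⋯ ∘ s_{β_3^∨} (β_2^∨), β_j ⟩ (where for j = 3 the composition of reflections is empty, i.e. the identity map). -/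
open scoped RealInnerProductSpace

/-- `chainCoroot2 β j = s_{β_j^∨} ∘ ⋯ ∘ s_{β_3^∨} (β_2^∨)`, the iterated coreflection
of the coroot of `β 2` (so `chainCoroot2 β 2 = β_2^∨`, the empty composition). -/
noncomputable def chainCoroot2 {V : Type*} [NormedAddCommGroup V] [InnerProductSpace ℝ V]
    (β : ℕ → V) : ℕ → V
  | 0 => 0
  | 1 => 0
  | 2 => coroot (β 2)
  | (j + 3) => coreflect (β (j + 3)) (chainCoroot2 β (j + 2))

lemma chain_eq_sum {V : Type*} [NormedAddCommGroup V] [InnerProductSpace ℝ V]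
    (β : ℕ → V) (hβ2 : β 2 ≠ 0) (hβ12 : β 1 = β 2)
    (a : ℕ → ℕ → ℝ) (ha : ∀ k j, a k j = ⟪β k, coroot (β j)⟫)
    (d : ℕ → ℝ) (hd1 : d 1 = 1)
    (hdk : ∀ k, 2 ≤ k → d k = -∑ j ∈ Finset.Ico 1 k, d j * a k j) :
    ∀ m, 2 ≤ m → chainCoroot2 β m = -∑ j ∈ Finset.Ico 1 (m + 1), d j • coroot (β j) := by
  have key : ∀ m, 2 ≤ m →
      (⟪-∑ j ∈ Finset.Ico 1 m, d j • coroot (β j), β m⟫ : ℝ) = d m := by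
    intro m hm
    rw [hdk m hm, inner_neg_left, sum_inner, neg_inj]
    refine Finset.sum_congr rfl fun j _ => ?_
    rw [real_inner_smul_left, ha, real_inner_comm]
  intro m hm
  induction m, hm using Nat.le_induction with
  | base =>
    have h2 : d 2 = -2 := by
      rw [hdk 2 le_rfl, show Finset.Ico 1 2 = {1} from rfl, Finset.sum_singleton]
      rw [hd1, ha, hβ12, coroot, real_inner_smul_right, div_mul_cancel₀]
      · ring
      · exact inner_self_ne_zero.mpr hβ2
    show coroot (β 2) = _
    rw [show (2 + 1 : ℕ) = 1 + 1 + 1 from rfl, Finset.sum_Ico_succ_top (by norm_num),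
      Finset.sum_Ico_succ_top (by norm_num)]
    simp [hd1, h2, hβ12, two_smul]
  | succ m hm ih =>
    obtain ⟨k, rfl⟩ : ∃ k, m = k + 2 := ⟨m - 2, by omega⟩
    show coreflect (β (k + 3)) (chainCoroot2 β (k + 2)) = _
    rw [coreflect, ih, key (k + 3) (by omega),
      Finset.sum_Ico_succ_top (show 1 ≤ k + 3 by omega)]
    abel

/-- Corollary 4.6 (b): if `β 1 = β 2`, then the recursively defined coefficients
`d j` satisfy `d j = ⟪α^∨_{i₂ i₃ ⋯ i_{j-1}}, α_{i_j}⟫` for all `3 ≤ j ≤ r`. -/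
theorem stmt5 {V : Type*} [NormedAddCommGroup V] [InnerProductSpace ℝ V]
    (r : ℕ) (β : ℕ → V) (hβ : ∀ j, 1 ≤ j → j ≤ r → β j ≠ 0) (hβ12 : β 1 = β 2)
    (a : ℕ → ℕ → ℝ) (ha : ∀ k j, a k j = ⟪β k, coroot (β j)⟫)
    (d : ℕ → ℝ) (hd1 : d 1 = 1)
    (hdk : ∀ k, 2 ≤ k → d k = -∑ j ∈ Finset.Ico 1 k, d j * a k j) :
    ∀ j, 3 ≤ j → j ≤ r → d j = ⟪chainCoroot2 β (j - 1), β j⟫ := by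
  intro j hj hjr
  have hβ2 : β 2 ≠ 0 := hβ 2 (by norm_num) (by omega)
  rw [chain_eq_sum β hβ2 hβ12 a ha d hd1 hdk (j - 1) (by omega),
    show j - 1 + 1 = j by omega, inner_neg_left, sum_inner, hdk j (by omega), neg_inj]
  refine Finset.sum_congr rfl fun k _ => ?_
  rw [real_inner_smul_left, ha, real_inner_comm]
end

section
/- Let B, P_1, …, P_m be groups, let ι_i : B → P_i be injective group homomorphisms for 1 ≤ i ≤ m, and let φ : B → B be a group homomorphism. Then the formula (p_1, p_2, …, p_m) · (b_1, b_2, …, b_m) := (p_1·ι_1(b_1), ι_2(φ(b_1))^{−1}·p_2·ι_2(b_2), …, ι_m(φ(b_{m−1}))^{−1}·p_m·ι_m(b_m)) defines a right action of the product group B^m := B × ⋯ × B (m copies) on the set P_1 × ⋯ × P_m, and this action is free: if (p_1, …, p_m)·(b_1, …, b_m) = (p_1, …, p_m), then b_i is the identity of B for every i. Equivalently, the map B^m × (P_1 × ⋯ × P_m) → (P_1 × ⋯ × P_m) × (P_1 × ⋯ × P_m) sending (b, p) to (p·b, p) is injective. -/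
/-- The twisted action of `B^m` on `P₁ × ⋯ × P_m` given by
`(p₁, …, p_m) · (b₁, …, b_m) = (p₁ ι₁(b₁), ι₂(φ(b₁))⁻¹ p₂ ι₂(b₂), …,
ι_m(φ(b_{m-1}))⁻¹ p_m ι_m(b_m))` is a right action, and it is free; equivalently
the map `(b, p) ↦ (p · b, p)` is injective. -/
theorem stmt6 {m : ℕ} {B : Type*} [Group B] {P : Fin m → Type*} [∀ i, Group (P i)]
    (ι : ∀ i, B →* P i) (hι : ∀ i, Function.Injective (ι i)) (φ : B →* B)
    (act : (∀ i, P i) → (Fin m → B) → (∀ i, P i))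
    (hact : ∀ p b i, act p b i =
      if (i : ℕ) = 0 then p i * ι i (b i)
      else (ι i (φ (b ⟨(i : ℕ) - 1, lt_of_le_of_lt (Nat.sub_le _ _) i.isLt⟩)))⁻¹ *
        p i * ι i (b i)) :
    (∀ p, act p (fun _ => 1) = p) ∧
    (∀ p b b', act (act p b) b' = act p (fun i => b i * b' i)) ∧
    (∀ p b, act p b = p → ∀ i, b i = 1) ∧
    Function.Injective (fun bp : (Fin m → B) × (∀ i, P i) => (act bp.2 bp.1, bp.2)) := by
  have h1 : ∀ p, act p (fun _ => 1) = p := by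
    intro p
    funext i
    rw [hact]
    split <;> simp
  have h2 : ∀ p b b', act (act p b) b' = act p (fun i => b i * b' i) := by
    intro p b b'
    funext i
    rw [hact, hact, hact]
    split <;> simp [map_mul, mul_inv_rev, mul_assoc]
  have h3 : ∀ p b, act p b = p → ∀ i, b i = 1 := by
    intro p b h i
    obtain ⟨n, hn⟩ := i
    induction n with
    | zero =>
      have h0 := congrFun h ⟨0, hn⟩
      rw [hact] at h0
      simp only [if_pos rfl, if_true] at h0
      have : ι ⟨0, hn⟩ (b ⟨0, hn⟩) = 1 := mul_eq_left.mp h0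
      exact hι _ (by rw [this, map_one])
    | succ n ih =>
      have hb : b ⟨n, lt_of_le_of_lt (Nat.le_succ n) hn⟩ = 1 :=
        ih (lt_of_le_of_lt (Nat.le_succ n) hn)
      have h0 := congrFun h ⟨n + 1, hn⟩
      rw [hact] at h0
      simp only [Nat.succ_ne_zero, if_false, Nat.add_sub_cancel] at h0
      rw [hb, map_one, map_one, inv_one, one_mul] at h0
      have : ι ⟨n + 1, hn⟩ (b ⟨n + 1, hn⟩) = 1 := mul_eq_left.mp h0
      exact hι _ (by rw [this, map_one])
  refine ⟨h1, h2, h3, ?_⟩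
  rintro ⟨b, p⟩ ⟨b', p'⟩ h
  simp only [Prod.mk.injEq] at h
  obtain ⟨hab, hp⟩ := h
  subst hp
  have hb : b = b' := by
    funext i
    have hc : act (act p b') (fun i => (b' i)⁻¹ * b i) = act p b' := by
      rw [h2]
      simp only [mul_inv_cancel_left]
      rw [hab]
    have := h3 _ _ hc i
    rw [inv_mul_eq_one] at this
    exact this.symm
  rw [hb]
end
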